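/- Let b > 0, β > 0, R > 0, a, c, k real satisfy the three conditions: 4ab² + 2bc(3+k) + (2abc + c²(3+k))R + 4b²cR² = 0; 2b(βc(3+k) − 4bk) + c(βc(3+k) − 4bk)R + (16b³ − 2abc + 4b²βc − c²(1+k))R² = 0; and 8b²βk + 4bβckR + (4ab² + β(c²(1+k) − 16b³))R² = 0. Then u(r) = r^{(k−1)/2}(R−r)(1 + (c/(2b) + 1/R) r) exp(−(c/(2b)) r − (b/2) r²) solves −u'' + [(k−1)(k−3)/(4r²) + a/(r+β) + c r + b² r²] u = E u on (0,R) with E = b(k+4) − c²/(4b²), and u(0) = u(R) = 0 (in the limit sense at 0 when k > 1). -/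

import Mathlib

noncomputable def sg18 (b c : ℝ) (r : ℝ) : ℝ := -(c / (2 * b)) * r - (b / 2) * r ^ 2

noncomputable def sP18 (b c R : ℝ) (r : ℝ) : ℝ := (R - r) * (1 + (c / (2 * b) + 1 / R) * r)

noncomputable def sPd18 (b c R : ℝ) (r : ℝ) : ℝ :=
  -(1 + (c / (2 * b) + 1 / R) * r) + (R - r) * (c / (2 * b) + 1 / R)

noncomputable def sgd18 (b c : ℝ) (r : ℝ) : ℝ := -(c / (2 * b)) - b * r

noncomputable def sQ18 (b c R k : ℝ) (r : ℝ) : ℝ :=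
  (k - 1) / 2 * sP18 b c R r + r * sPd18 b c R r + r * sP18 b c R r * sgd18 b c r

noncomputable def sQd18 (b c R k : ℝ) (r : ℝ) : ℝ :=
  (k - 1) / 2 * sPd18 b c R r + (sPd18 b c R r + r * (-2 * (c / (2 * b) + 1 / R)))
    + (sP18 b c R r + r * sPd18 b c R r) * sgd18 b c r + r * sP18 b c R r * (-b)

noncomputable def sT18 (b c R k : ℝ) (r : ℝ) : ℝ :=
  ((k - 1) / 2 - 1) * sQ18 b c R k r + r * sQd18 b c R k r + r * sQ18 b c R k r * sgd18 b c r

lemma hDu18 (b c R k r : ℝ) (hr : 0 < r) :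
    HasDerivAt (fun x : ℝ => x ^ ((k - 1) / 2) * (R - x) * (1 + (c / (2 * b) + 1 / R) * x) *
        Real.exp (-(c / (2 * b)) * x - (b / 2) * x ^ 2))
      (r ^ ((k - 1) / 2 - 1) * sQ18 b c R k r * Real.exp (sg18 b c r)) r := by
  have hrpow : HasDerivAt (fun x : ℝ => x ^ ((k - 1) / 2))
      ((k - 1) / 2 * r ^ ((k - 1) / 2 - 1)) r := Real.hasDerivAt_rpow_const (Or.inl hr.ne')
  have hA : HasDerivAt (fun x : ℝ => R - x) (-1) r := (hasDerivAt_id r).const_sub R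
  have hB : HasDerivAt (fun x : ℝ => 1 + (c / (2 * b) + 1 / R) * x)
      ((c / (2 * b) + 1 / R) * 1) r := ((hasDerivAt_id r).const_mul _).const_add 1
  have hg : HasDerivAt (fun x : ℝ => -(c / (2 * b)) * x - (b / 2) * x ^ 2)
      (-(c / (2 * b)) * 1 - (b / 2) * (↑2 * r ^ 1)) r :=
    ((hasDerivAt_id r).const_mul _).sub ((hasDerivAt_pow 2 r).const_mul _)
  have total := ((hrpow.mul hA).mul hB).mul hg.exp
  refine total.congr_deriv ?_
  simp only [Pi.mul_apply]
  have hsplit : r ^ ((k - 1) / 2) = r ^ ((k - 1) / 2 - 1) * r := by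
    have h := Real.rpow_add hr ((k - 1) / 2 - 1) 1
    rw [Real.rpow_one] at h
    rw [← h]; congr 1; ring
  rw [hsplit]
  simp only [sQ18, sP18, sPd18, sgd18, sg18, id_eq]
  ring

lemma hDu18' (b c R k r : ℝ) (hr : 0 < r) :
    HasDerivAt (fun x : ℝ => x ^ ((k - 1) / 2 - 1) * sQ18 b c R k x * Real.exp (sg18 b c x))
      (r ^ ((k - 1) / 2 - 2) * sT18 b c R k r * Real.exp (sg18 b c r)) r := by
  have hrpow : HasDerivAt (fun x : ℝ => x ^ ((k - 1) / 2 - 1))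
      (((k - 1) / 2 - 1) * r ^ ((k - 1) / 2 - 1 - 1)) r :=
    Real.hasDerivAt_rpow_const (Or.inl hr.ne')
  have hA : HasDerivAt (fun x : ℝ => R - x) (-1) r := (hasDerivAt_id r).const_sub R
  have hB : HasDerivAt (fun x : ℝ => 1 + (c / (2 * b) + 1 / R) * x)
      ((c / (2 * b) + 1 / R) * 1) r := ((hasDerivAt_id r).const_mul _).const_add 1
  have hP : HasDerivAt (fun x : ℝ => (R - x) * (1 + (c / (2 * b) + 1 / R) * x))
      (-1 * (1 + (c / (2 * b) + 1 / R) * r) + (R - r) * ((c / (2 * b) + 1 / R) * 1)) r :=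
    hA.mul hB
  have hPd : HasDerivAt (fun x : ℝ =>
      -(1 + (c / (2 * b) + 1 / R) * x) + (R - x) * (c / (2 * b) + 1 / R))
      (-((c / (2 * b) + 1 / R) * 1) + -1 * (c / (2 * b) + 1 / R)) r :=
    hB.neg.add (hA.mul_const _)
  have hgd : HasDerivAt (fun x : ℝ => -(c / (2 * b)) - b * x) (-(b * 1)) r :=
    ((hasDerivAt_id r).const_mul b).const_sub _
  have hQ : HasDerivAt (fun x : ℝ => sQ18 b c R k x) (sQd18 b c R k r) r := by
    simp only [sQ18, sP18, sPd18, sgd18]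
    have tot := ((hP.const_mul ((k - 1) / 2)).add ((hasDerivAt_id r).mul hPd)).add
      (((hasDerivAt_id r).mul hP).mul hgd)
    refine tot.congr_deriv ?_
    simp only [Pi.mul_apply, Pi.add_apply]
    simp only [sQd18, sP18, sPd18, sgd18, id_eq]
    ring
  have hg : HasDerivAt (fun x : ℝ => -(c / (2 * b)) * x - (b / 2) * x ^ 2)
      (-(c / (2 * b)) * 1 - (b / 2) * (↑2 * r ^ 1)) r :=
    ((hasDerivAt_id r).const_mul _).sub ((hasDerivAt_pow 2 r).const_mul _)
  have hexp : HasDerivAt (fun x : ℝ => Real.exp (sg18 b c x))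
      (Real.exp (sg18 b c r) * (-(c / (2 * b)) * 1 - (b / 2) * (↑2 * r ^ 1))) r := by
    simp only [sg18]
    exact hg.exp
  have total := ((hrpow.mul hQ).mul hexp)
  refine total.congr_deriv ?_
  simp only [Pi.mul_apply]
  have he : r ^ ((k - 1) / 2 - 1 - 1) = r ^ ((k - 1) / 2 - 2) := by congr 1; ring
  have hsplit : r ^ ((k - 1) / 2 - 1) = r ^ ((k - 1) / 2 - 2) * r := by
    have h := Real.rpow_add hr ((k - 1) / 2 - 2) 1
    rw [Real.rpow_one] at h
    rw [← h]; congr 1; ring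
  rw [he, hsplit]
  simp only [sT18, sgd18, id_eq]
  ring

set_option maxHeartbeats 4000000 in
lemma key18 (b β R a c k r : ℝ) (hb : b ≠ 0) (hR : R ≠ 0) (hr : r ≠ 0) (hrb : r + β ≠ 0)
    (h1 : 4 * a * b ^ 2 + 2 * b * c * (3 + k) + (2 * a * b * c + c ^ 2 * (3 + k)) * R +
        4 * b ^ 2 * c * R ^ 2 = 0)
    (h2 : 2 * b * (β * c * (3 + k) - 4 * b * k) + c * (β * c * (3 + k) - 4 * b * k) * R +
        (16 * b ^ 3 - 2 * a * b * c + 4 * b ^ 2 * β * c - c ^ 2 * (1 + k)) * R ^ 2 = 0)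
    (h3 : 8 * b ^ 2 * β * k + 4 * b * β * c * k * R +
        (4 * a * b ^ 2 + β * (c ^ 2 * (1 + k) - 16 * b ^ 3)) * R ^ 2 = 0) :
    -(sT18 b c R k r) +
      ((k - 1) * (k - 3) / (4 * r ^ 2) + a / (r + β) + c * r + b ^ 2 * r ^ 2
        - (b * (k + 4) - c ^ 2 / (4 * b ^ 2))) * (r ^ 2 * sP18 b c R r) = 0 := by
  simp only [sT18, sQd18, sQ18, sP18, sPd18, sgd18]
  field_simp
  linear_combination (8 * b * r ^ 2) * h3 -
    (8 * b * r ^ 3) * h2 - (8 * b * r ^ 4) * h1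

theorem stmt_18 (b β R a c k E : ℝ) (hb : 0 < b) (hβ : 0 < β) (hR : 0 < R) (hk : 1 < k)
    (h1 : 4 * a * b ^ 2 + 2 * b * c * (3 + k) + (2 * a * b * c + c ^ 2 * (3 + k)) * R +
        4 * b ^ 2 * c * R ^ 2 = 0)
    (h2 : 2 * b * (β * c * (3 + k) - 4 * b * k) + c * (β * c * (3 + k) - 4 * b * k) * R +
        (16 * b ^ 3 - 2 * a * b * c + 4 * b ^ 2 * β * c - c ^ 2 * (1 + k)) * R ^ 2 = 0)
    (h3 : 8 * b ^ 2 * β * k + 4 * b * β * c * k * R +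
        (4 * a * b ^ 2 + β * (c ^ 2 * (1 + k) - 16 * b ^ 3)) * R ^ 2 = 0)
    (hE : E = b * (k + 4) - c ^ 2 / (4 * b ^ 2))
    (u : ℝ → ℝ)
    (hu : u = fun r : ℝ =>
      r ^ ((k - 1) / 2) * (R - r) * (1 + (c / (2 * b) + 1 / R) * r) *
        Real.exp (-(c / (2 * b)) * r - (b / 2) * r ^ 2)) :
    (∀ r ∈ Set.Ioo (0 : ℝ) R,
        -(deriv (deriv u) r) +
          ((k - 1) * (k - 3) / (4 * r ^ 2) + a / (r + β) + c * r + b ^ 2 * r ^ 2) * u r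
          = E * u r) ∧
    Filter.Tendsto u (nhdsWithin 0 (Set.Ioi 0)) (nhds 0) ∧ u R = 0 := by
  subst hu hE
  refine ⟨?_, ?_, ?_⟩
  · intro r hrm
    obtain ⟨hr0, hrR⟩ := hrm
    have hdu : deriv (fun x : ℝ => x ^ ((k - 1) / 2) * (R - x) * (1 + (c / (2 * b) + 1 / R) * x) *
        Real.exp (-(c / (2 * b)) * x - (b / 2) * x ^ 2)) =ᶠ[nhds r]
        (fun x : ℝ => x ^ ((k - 1) / 2 - 1) * sQ18 b c R k x * Real.exp (sg18 b c x)) := by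
      filter_upwards [Ioi_mem_nhds hr0] with x hx
      exact (hDu18 b c R k x hx).deriv
    rw [hdu.deriv_eq, (hDu18' b c R k r hr0).deriv]
    have hXpos : 0 < r ^ ((k - 1) / 2 - 2) := Real.rpow_pos_of_pos hr0 _
    have hrb : r + β ≠ 0 := by positivity
    beta_reduce
    have hsplit : r ^ ((k - 1) / 2) = r ^ ((k - 1) / 2 - 2) * r ^ 2 := by
      have h := Real.rpow_add hr0 ((k - 1) / 2 - 2) 2
      rw [Real.rpow_two] at h
      rw [← h]; congr 1; ring
    rw [hsplit]
    simp only [sg18, sP18] at *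
    have key := key18 b β R a c k r hb.ne' hR.ne' hr0.ne' hrb h1 h2 h3
    simp only [sP18] at key
    linear_combination
      (r ^ ((k - 1) / 2 - 2) * Real.exp (-(c / (2 * b)) * r - b / 2 * r ^ 2)) * key
  · have hp : 0 < (k - 1) / 2 := by linarith
    have h0 : Filter.Tendsto (fun x : ℝ => x ^ ((k - 1) / 2)) (nhdsWithin 0 (Set.Ioi 0))
        (nhds 0) := by
      have hc := (Real.continuousAt_rpow_const 0 ((k - 1) / 2) (Or.inr hp.le)).tendsto
      rw [Real.zero_rpow hp.ne'] at hc
      exact hc.mono_left nhdsWithin_le_nhds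
    have hA : Filter.Tendsto (fun x : ℝ => R - x) (nhdsWithin 0 (Set.Ioi 0)) (nhds (R - 0)) :=
      ((continuous_const.sub continuous_id).tendsto 0).mono_left nhdsWithin_le_nhds
    have hB : Filter.Tendsto (fun x : ℝ => 1 + (c / (2 * b) + 1 / R) * x)
        (nhdsWithin 0 (Set.Ioi 0)) (nhds (1 + (c / (2 * b) + 1 / R) * 0)) :=
      ((continuous_const.add (continuous_const.mul continuous_id)).tendsto 0).mono_left
        nhdsWithin_le_nhds
    have hC : Filter.Tendsto (fun x : ℝ => Real.exp (-(c / (2 * b)) * x - (b / 2) * x ^ 2))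
        (nhdsWithin 0 (Set.Ioi 0))
        (nhds (Real.exp (-(c / (2 * b)) * 0 - (b / 2) * 0 ^ 2))) :=
      (((continuous_const.mul continuous_id).sub
        (continuous_const.mul (continuous_pow 2))).rexp.tendsto 0).mono_left nhdsWithin_le_nhds
    have := ((h0.mul hA).mul hB).mul hC
    simpa using this
  · simp
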